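/- Fix 1 < p ≤ q < ∞, p' = p/(p-1), and let k ∈ M_+(ℝ_+). Then there is a constant c > 0 such that [ ∫_{ℝ_+} ( k(x) ∫_0^x f(y) dy )^q dx ]^{1/q} ≤ c [ ∫_{ℝ_+} f(y)^p dy ]^{1/p} for all f ∈ M_+(ℝ_+), if and only if sup_{x>0} x ( ∫_x^∞ k(y)^q dy )^{p'/q} < ∞. -/

import Mathlib

open MeasureTheory Set
open scoped ENNReal

noncomputable section

/-- The positive integral operator `T_K` on `ℝ₊`. -/
def TK (K : ℝ → ℝ → ℝ≥0∞) (f : ℝ → ℝ≥0∞) (x : ℝ) : ℝ≥0∞ :=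
  ∫⁻ y in Ioi (0:ℝ), K x y * f y

/-- Distribution function `μ_f(λ) = |{x ∈ ℝ₊ : f x > λ}|`. -/
def distrib (f : ℝ → ℝ≥0∞) (l : ℝ≥0∞) : ℝ≥0∞ :=
  volume {x : ℝ | 0 < x ∧ l < f x}

/-- Nonincreasing rearrangement `f*(t) = inf{λ : μ_f(λ) ≤ t}`. -/
def rearr (f : ℝ → ℝ≥0∞) (t : ℝ) : ℝ≥0∞ :=
  sInf {l : ℝ≥0∞ | distrib f l ≤ ENNReal.ofReal t}

/-- Extension of a real function to `ℝ≥0∞`. -/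
def extE (F : ℝ → ℝ) (a : ℝ≥0∞) : ℝ≥0∞ :=
  if a = ⊤ then ⊤ else ENNReal.ofReal (F a.toReal)

/-- Orlicz–Lorentz gauge functional `ρ_{Φ,u}`. -/
def ogauge (F : ℝ → ℝ) (u : ℝ → ℝ) (f : ℝ → ℝ≥0∞) : ℝ≥0∞ :=
  sInf {l : ℝ≥0∞ | 0 < l ∧
    (∫⁻ x in Ioi (0:ℝ), extE F (f x / l) * ENNReal.ofReal (u x)) ≤ 1}

/-- `F` is an N-function with density `φ`: `F x = ∫_0^x φ`, `φ` increasing from `ℝ₊` onto `ℝ₊`. -/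
def IsNFunction (F φ : ℝ → ℝ) : Prop :=
  StrictMonoOn φ (Ioi 0) ∧ MapsTo φ (Ioi 0) (Ioi 0) ∧ SurjOn φ (Ioi 0) (Ioi 0) ∧
    ∀ x : ℝ, 0 ≤ x → F x = ∫ y in (0:ℝ)..x, φ y

/-- `F(2t) ≈ F(t)` on `ℝ₊`. -/
def Doubling (F : ℝ → ℝ) : Prop := ∃ C > 0, ∀ t > 0, F (2 * t) ≤ C * F t

/-- A weight: nonnegative, measurable, locally integrable on `ℝ₊`. -/
def IsWeight (u : ℝ → ℝ) : Prop :=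
  Measurable u ∧ (∀ x, 0 ≤ u x) ∧ LocallyIntegrableOn u (Ioi 0)

/-- `U(x) = ∫_0^x u`. -/
def Uw (u : ℝ → ℝ) (x : ℝ) : ℝ := ∫ t in (0:ℝ)..x, u t

/-- `Ψ` (with density `ψ`) is the complementary N-function of the N-function `Φ`
(with density `φ`), i.e. `ψ = φ⁻¹` and `Ψ t = ∫_0^t φ⁻¹`. -/
def IsComplementary (F φ G ψ : ℝ → ℝ) : Prop :=
  IsNFunction F φ ∧ IsNFunction G ψ ∧ InvOn ψ φ (Ioi 0) (Ioi 0)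

/-- `g` is the inverse of `f` on `[0,∞)`. -/
def IsInverseOn (g f : ℝ → ℝ) : Prop :=
  (∀ x ≥ 0, g (f x) = x) ∧ (∀ y ≥ 0, f (g y) = y)

/-- Iterated rearrangement `L(t,s) = (K^{*₂})^{*₁}(t,s)`. -/
def iterRearr (K : ℝ → ℝ → ℝ≥0∞) (t s : ℝ) : ℝ≥0∞ :=
  rearr (fun x => rearr (fun y => K x y) s) t

/-- `α(λ,x) = ∫_x^∞ Φ(λ/U(y)) u(y) dy`. -/
def hardyAlpha (F : ℝ → ℝ) (u : ℝ → ℝ) (lam x : ℝ) : ℝ≥0∞ :=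
  ∫⁻ y in Ioi x, extE F (ENNReal.ofReal lam / ENNReal.ofReal (Uw u y)) * ENNReal.ofReal (u y)

/-- `β(λ,x) = ∫_x^∞ Φ(λ/y) u(y) dy`. -/
def hardyBeta (F : ℝ → ℝ) (u : ℝ → ℝ) (lam x : ℝ) : ℝ≥0∞ :=
  ∫⁻ y in Ioi x, ENNReal.ofReal (F (lam / y)) * ENNReal.ofReal (u y)

/-- The Hardy-averaging conditions (14)–(15) for an N-function `Φ` (density `φ`,
inverse density `ψ = φ⁻¹`) and weight `u`. -/
def HardyConditions (F φ ψ u : ℝ → ℝ) : Prop :=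
  ∃ c > 0, (∀ lam > 0, ∀ x > 0,
      extE φ (ENNReal.ofReal c * hardyAlpha F u lam x / ENNReal.ofReal lam) *
        ENNReal.ofReal (Uw u x) ≤ ENNReal.ofReal (lam / c)) ∧
    (∀ lam > 0, ∀ x > 0,
      (∫⁻ y in Ioo (0:ℝ) x,
        extE ψ ((ENNReal.ofReal c * hardyBeta F u lam x / ENNReal.ofReal lam) *
          ENNReal.ofReal (y / Uw u y)) * ENNReal.ofReal (y * u y / Uw u y))
        ≤ ENNReal.ofReal (lam / c))


open Filter in
lemma isup_min_nat (a : ℝ≥0∞) : ⨆ n : ℕ, min a (n : ℝ≥0∞) = a := by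
  apply le_antisymm (iSup_le fun n => min_le_left _ _)
  rcases eq_or_ne a ⊤ with ha | ha
  · have : ⨆ n : ℕ, min a (n : ℝ≥0∞) = ⨆ n : ℕ, (n : ℝ≥0∞) := by
      refine iSup_congr fun n => ?_
      simp [ha]
    rw [this, ENNReal.iSup_natCast, ha]
  · obtain ⟨n, hn⟩ := ENNReal.exists_nat_gt ha
    exact le_trans (le_of_eq (min_eq_left hn.le).symm) (le_iSup (fun n : ℕ => min a n) n)

open Filter in
lemma isup_rpow {f : ℕ → ℝ≥0∞} (hf : Monotone f) {r : ℝ} (hr : 0 < r) :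
    (⨆ n, f n) ^ r = ⨆ n, f n ^ r := by
  have h1 : Tendsto f atTop (nhds (⨆ n, f n)) := tendsto_atTop_iSup hf
  have h2 : Tendsto (fun n => f n ^ r) atTop (nhds ((⨆ n, f n) ^ r)) :=
    (ENNReal.continuous_rpow_const.tendsto _).comp h1
  have h3 : Tendsto (fun n => f n ^ r) atTop (nhds (⨆ n, f n ^ r)) :=
    tendsto_atTop_iSup (fun i j h => ENNReal.rpow_le_rpow (hf h) hr.le)
  exact tendsto_nhds_unique h2 h3

lemma isup_mul_mono {a b : ℕ → ℝ≥0∞} (ha : Monotone a) (hb : Monotone b) :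
    (⨆ n, a n) * (⨆ n, b n) = ⨆ n, a n * b n := by
  apply le_antisymm
  · rw [ENNReal.iSup_mul]
    refine iSup_le fun i => ?_
    rw [ENNReal.mul_iSup]
    refine iSup_le fun j => ?_
    calc a i * b j ≤ a (max i j) * b (max i j) :=
          mul_le_mul' (ha (le_max_left _ _)) (hb (le_max_right _ _))
      _ ≤ _ := le_iSup (fun n => a n * b n) (max i j)
  · exact iSup_le fun n => mul_le_mul' (le_iSup a n) (le_iSup b n)

lemma swap_tri {Φ g : ℝ → ℝ≥0∞} (hΦ : Measurable Φ) (hg : Measurable g) :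
    ∫⁻ x in Ioi (0:ℝ), Φ x * ∫⁻ y in Ioo (0:ℝ) x, g y =
      ∫⁻ y in Ioi (0:ℝ), g y * ∫⁻ x in Ioi y, Φ x := by
  set μ := volume.restrict (Ioi (0:ℝ)) with hμ
  have hmeas : Measurable (Function.uncurry fun x y => ite (y < x) (Φ x * g y) 0) := by
    apply Measurable.ite
    · exact measurableSet_lt measurable_snd measurable_fst
    · exact (hΦ.comp measurable_fst).mul (hg.comp measurable_snd)
    · exact measurable_const
  have key : ∫⁻ x, ∫⁻ y, ite (y < x) (Φ x * g y) 0 ∂μ ∂μ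
      = ∫⁻ y, ∫⁻ x, ite (y < x) (Φ x * g y) 0 ∂μ ∂μ :=
    lintegral_lintegral_swap hmeas.aemeasurable
  have hL : ∫⁻ x in Ioi (0:ℝ), Φ x * ∫⁻ y in Ioo (0:ℝ) x, g y
      = ∫⁻ x, ∫⁻ y, ite (y < x) (Φ x * g y) 0 ∂μ ∂μ := by
    refine setLIntegral_congr_fun measurableSet_Ioi (fun x hx => ?_)
    have h1 : (fun y => ite (y < x) (Φ x * g y) 0) = (Iio x).indicator (fun y => Φ x * g y) := by
      funext y; by_cases h : y < x <;> simp [Set.indicator_apply, h, Set.mem_Iio]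
    rw [h1, lintegral_indicator measurableSet_Iio, hμ,
      Measure.restrict_restrict measurableSet_Iio]
    have h2 : Iio x ∩ Ioi (0:ℝ) = Ioo 0 x := by rw [inter_comm, Set.Ioi_inter_Iio]
    rw [h2, lintegral_const_mul (Φ x) hg]
  have hR : ∫⁻ y in Ioi (0:ℝ), g y * ∫⁻ x in Ioi y, Φ x
      = ∫⁻ y, ∫⁻ x, ite (y < x) (Φ x * g y) 0 ∂μ ∂μ := by
    refine setLIntegral_congr_fun measurableSet_Ioi (fun y hy => ?_)
    have h1 : (fun x => ite (y < x) (Φ x * g y) 0) = (Ioi y).indicator (fun x => Φ x * g y) := by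
      funext x; by_cases h : y < x <;> simp [Set.indicator_apply, h, Set.mem_Ioi]
    rw [h1, lintegral_indicator measurableSet_Ioi, hμ,
      Measure.restrict_restrict measurableSet_Ioi]
    have h2 : Ioi y ∩ Ioi (0:ℝ) = Ioi y :=
      inter_eq_self_of_subset_left (Ioi_subset_Ioi (le_of_lt hy))
    rw [h2, lintegral_mul_const (g y) hΦ, mul_comm]
  rw [hL, hR, key]

lemma minkowski_tri_of_ne_top {r : ℝ} (hr : 1 < r) {W g : ℝ → ℝ≥0∞}
    (hW : Measurable W) (hg : Measurable g)
    (hfin : ∫⁻ x in Ioi (0:ℝ), W x * (∫⁻ y in Ioo (0:ℝ) x, g y) ^ r ≠ ⊤) :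
    ∫⁻ x in Ioi (0:ℝ), W x * (∫⁻ y in Ioo (0:ℝ) x, g y) ^ r ≤
      (∫⁻ y in Ioi (0:ℝ), g y * (∫⁻ x in Ioi y, W x) ^ (1/r)) ^ r := by
  have hr0 : (0:ℝ) < r := lt_trans one_pos hr
  have hr1 : r - 1 ≠ 0 := by linarith
  have hsub : (0:ℝ) ≤ 1 - 1/r := by rw [sub_nonneg, div_le_one hr0]; linarith
  have key1 : (1 - 1/r) * (r/(r-1)) = 1 := by
    rw [one_sub_div hr0.ne', div_mul_div_comm, mul_comm r (r-1), div_self]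
    exact mul_ne_zero hr1 hr0.ne'
  have key2 : (r-1) * (r/(r-1)) = r := by
    rw [mul_comm, div_mul_eq_mul_div, mul_div_assoc, div_self hr1, mul_one]
  have key3 : 1/(r/(r-1)) = 1 - 1/r := by
    rw [one_div_div, one_sub_div hr0.ne']
  set H : ℝ → ℝ≥0∞ := fun x => ∫⁻ y in Ioo (0:ℝ) x, g y with hH
  have hHmono : Monotone H := fun x x' h =>
    lintegral_mono_set (Ioo_subset_Ioo le_rfl h)
  have hHmeas : Measurable H := hHmono.measurable
  set T : ℝ → ℝ≥0∞ := fun y => ∫⁻ x in Ioi y, W x with hT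
  have hTanti : Antitone T := fun a b h => lintegral_mono_set (Ioi_subset_Ioi h)
  have hTmeas : Measurable T := hTanti.measurable
  set I := ∫⁻ x in Ioi (0:ℝ), W x * H x ^ r with hI
  set J := ∫⁻ y in Ioi (0:ℝ), g y * T y ^ (1/r) with hJ
  show I ≤ J ^ r
  by_cases hI0 : I = 0
  · rw [hI0]; exact zero_le'
  have hHr1meas : Measurable fun x => H x ^ (r - 1) :=
    ENNReal.continuous_rpow_const.measurable.comp hHmeas
  have hsplit : ∀ x, W x * H x ^ r = (W x * H x ^ (r-1)) * H x := by
    intro x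
    rw [mul_assoc]
    congr 1
    rw [show r = (r-1)+1 by ring, ENNReal.rpow_add_of_nonneg _ _ (by linarith) zero_le_one,
      ENNReal.rpow_one]
    ring_nf
  have hswap : I = ∫⁻ y in Ioi (0:ℝ), g y * ∫⁻ x in Ioi y, W x * H x ^ (r-1) := by
    rw [hI]
    simp_rw [hsplit]
    exact swap_tri (hW.mul hHr1meas) hg
  have hconj : Real.HolderConjugate (r/(r-1)) r := by
    rw [Real.holderConjugate_iff]
    constructor
    · rw [lt_div_iff₀ (by linarith)]; linarith
    · field_simp; ring
  have hinner : ∀ y : ℝ, 0 < y →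
      (∫⁻ x in Ioi y, W x * H x ^ (r-1)) ≤ I ^ (1 - 1/r) * T y ^ (1/r) := by
    intro y hy
    have hsplitW : ∀ x : ℝ, W x * H x ^ (r-1)
        = (W x ^ (1 - 1/r) * H x ^ (r-1)) * W x ^ (1/r) := by
      intro x
      rw [mul_right_comm]
      congr 1
      rw [← ENNReal.rpow_add_of_nonneg _ _ hsub (one_div_nonneg.mpr hr0.le),
        sub_add_cancel, ENNReal.rpow_one]
    calc (∫⁻ x in Ioi y, W x * H x ^ (r-1))
        = ∫⁻ x in Ioi y, (fun x => W x ^ (1 - 1/r) * H x ^ (r-1)) x * (fun x => W x ^ (1/r)) x := by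
          simp_rw [hsplitW]
      _ ≤ (∫⁻ x in Ioi y, (W x ^ (1 - 1/r) * H x ^ (r-1)) ^ (r/(r-1))) ^ (1/(r/(r-1))) *
            (∫⁻ x in Ioi y, (W x ^ (1/r)) ^ r) ^ (1/r) :=
          ENNReal.lintegral_mul_le_Lp_mul_Lq _ hconj
            (((ENNReal.continuous_rpow_const.measurable.comp hW).mul hHr1meas).aemeasurable)
            ((ENNReal.continuous_rpow_const.measurable.comp hW).aemeasurable)
      _ ≤ I ^ (1 - 1/r) * T y ^ (1/r) := by
          have e1 : ∀ x : ℝ, (W x ^ (1 - 1/r) * H x ^ (r-1)) ^ (r/(r-1)) = W x * H x ^ r := by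
            intro x
            rw [ENNReal.mul_rpow_of_nonneg _ _ (div_nonneg hr0.le (by linarith)), ← ENNReal.rpow_mul,
              ← ENNReal.rpow_mul, key1, key2, ENNReal.rpow_one]
          have e2 : ∀ x : ℝ, (W x ^ (1/r)) ^ r = W x := by
            intro x
            rw [← ENNReal.rpow_mul, one_div, inv_mul_cancel₀ hr0.ne', ENNReal.rpow_one]
          simp_rw [e1, e2, key3]
          refine mul_le_mul_left (ENNReal.rpow_le_rpow ?_ hsub) _
          exact lintegral_mono_set (Ioi_subset_Ioi hy.le)
  have hIJ : I ≤ I ^ (1 - 1/r) * J := by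
    calc I = ∫⁻ y in Ioi (0:ℝ), g y * ∫⁻ x in Ioi y, W x * H x ^ (r-1) := hswap
      _ ≤ ∫⁻ y in Ioi (0:ℝ), I ^ (1 - 1/r) * (g y * T y ^ (1/r)) := by
          refine setLIntegral_mono_ae
            (measurable_const.mul (hg.mul
              (ENNReal.continuous_rpow_const.measurable.comp hTmeas))).aemeasurable
            (ae_of_all _ fun y hy => ?_)
          rw [mul_left_comm]
          exact mul_le_mul_right (hinner y hy) _
      _ = I ^ (1 - 1/r) * J := by
          rw [hJ, lintegral_const_mul']
          exact ENNReal.rpow_ne_top_of_nonneg hsub hfin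
  have hpow_ne_top : I ^ (1 - 1/r) ≠ ⊤ := ENNReal.rpow_ne_top_of_nonneg hsub hfin
  have hpow_ne_zero : I ^ (1 - 1/r) ≠ 0 := by
    simp [ENNReal.rpow_eq_zero_iff, hI0, hfin]
  have hId : I = I ^ (1 - 1/r) * I ^ (1/r) := by
    rw [← ENNReal.rpow_add _ _ hI0 hfin, sub_add_cancel, ENNReal.rpow_one]
  have h2 : I ^ (1 - 1/r) * I ^ (1/r) ≤ I ^ (1 - 1/r) * J := le_trans (le_of_eq hId.symm) hIJ
  have hfinal : I ^ (1/r) ≤ J := (ENNReal.mul_le_mul_iff_right hpow_ne_zero hpow_ne_top).mp h2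
  calc I = (I ^ (1/r)) ^ r := by
        rw [← ENNReal.rpow_mul, one_div, inv_mul_cancel₀ hr0.ne', ENNReal.rpow_one]
    _ ≤ J ^ r := ENNReal.rpow_le_rpow hfinal hr0.le

/-- trunc12ation of an `ℝ≥0∞`-valued function -/
def trunc12 (f : ℝ → ℝ≥0∞) (n : ℕ) (y : ℝ) : ℝ≥0∞ :=
  min (f y) n * (Ioo ((n:ℝ)+1)⁻¹ ((n:ℝ)+1)).indicator 1 y

lemma trunc12_meas {f : ℝ → ℝ≥0∞} (hf : Measurable f) (n : ℕ) : Measurable (trunc12 f n) :=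
  (hf.min measurable_const).mul (measurable_one.indicator measurableSet_Ioo)

lemma trunc12_mono {f : ℝ → ℝ≥0∞} : Monotone (trunc12 f) := by
  intro n m hnm y
  unfold trunc12
  refine mul_le_mul' (min_le_min le_rfl (by exact_mod_cast Nat.cast_le.2 hnm)) ?_
  refine Set.indicator_le_indicator_of_subset (Ioo_subset_Ioo ?_ ?_) (fun _ => zero_le') y
  · apply inv_anti₀ (by positivity)
    exact_mod_cast by exact_mod_cast add_le_add_left (Nat.cast_le.2 hnm) 1
  · exact_mod_cast add_le_add_left (Nat.cast_le.2 hnm) 1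

lemma trunc12_le (f : ℝ → ℝ≥0∞) (n : ℕ) (y : ℝ) : trunc12 f n y ≤ f y := by
  unfold trunc12
  calc min (f y) n * (Ioo ((n:ℝ)+1)⁻¹ ((n:ℝ)+1)).indicator 1 y
      ≤ f y * 1 := by
        refine mul_le_mul' (min_le_left _ _) ?_
        by_cases h : y ∈ Ioo ((n:ℝ)+1)⁻¹ ((n:ℝ)+1) <;>
          simp [Set.indicator_apply, h]
    _ = f y := mul_one _

lemma trunc12_le_const (f : ℝ → ℝ≥0∞) (n : ℕ) (y : ℝ) : trunc12 f n y ≤ n := by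
  unfold trunc12
  calc min (f y) n * (Ioo ((n:ℝ)+1)⁻¹ ((n:ℝ)+1)).indicator 1 y
      ≤ (n:ℝ≥0∞) * 1 := by
        refine mul_le_mul' (min_le_right _ _) ?_
        by_cases h : y ∈ Ioo ((n:ℝ)+1)⁻¹ ((n:ℝ)+1) <;>
          simp [Set.indicator_apply, h]
    _ = n := mul_one _

lemma trunc12_eq_zero_of_not_mem (f : ℝ → ℝ≥0∞) (n : ℕ) {y : ℝ}
    (h : y ∉ Ioo ((n:ℝ)+1)⁻¹ ((n:ℝ)+1)) : trunc12 f n y = 0 := by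
  unfold trunc12
  rw [Set.indicator_of_notMem h, mul_zero]

lemma trunc12_sup (f : ℝ → ℝ≥0∞) {y : ℝ} (hy : 0 < y) : ⨆ n, trunc12 f n y = f y := by
  apply le_antisymm (iSup_le fun n => trunc12_le f n y)
  conv_lhs => rw [← isup_min_nat (f y)]
  refine iSup_le fun m => ?_
  obtain ⟨n₀, hn₀⟩ := exists_nat_gt (max y y⁻¹)
  have hy1 : y < (n₀:ℝ) := lt_of_le_of_lt (le_max_left _ _) hn₀
  have hy2 : y⁻¹ < (n₀:ℝ) := lt_of_le_of_lt (le_max_right _ _) hn₀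
  set N := max m n₀ with hN
  have hmem : y ∈ Ioo ((N:ℝ)+1)⁻¹ ((N:ℝ)+1) := by
    constructor
    · have h1 : y⁻¹ < (N:ℝ)+1 := by
        have : (n₀:ℝ) ≤ N := by exact_mod_cast Nat.cast_le.2 (le_max_right m n₀)
        linarith
      calc ((N:ℝ)+1)⁻¹ < (y⁻¹)⁻¹ := by
            apply inv_strictAnti₀ (by positivity) h1
        _ = y := inv_inv y
    · have : (n₀:ℝ) ≤ N := by exact_mod_cast Nat.cast_le.2 (le_max_right m n₀)
      linarith
  have : trunc12 f N y = min (f y) N := by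
    unfold trunc12
    rw [Set.indicator_of_mem hmem, Pi.one_apply, mul_one]
  calc min (f y) (m:ℝ≥0∞) ≤ min (f y) (N:ℝ≥0∞) :=
        min_le_min le_rfl (by exact_mod_cast Nat.cast_le.2 (le_max_left m n₀))
    _ = trunc12 f N y := this.symm
    _ ≤ ⨆ n, trunc12 f n y := le_iSup (fun n => trunc12 f n y) N

lemma minkowski_tri {r : ℝ} (hr : 1 ≤ r) {W g : ℝ → ℝ≥0∞}
    (hW : Measurable W) (hg : Measurable g) :
    ∫⁻ x in Ioi (0:ℝ), W x * (∫⁻ y in Ioo (0:ℝ) x, g y) ^ r ≤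
      (∫⁻ y in Ioi (0:ℝ), g y * (∫⁻ x in Ioi y, W x) ^ (1/r)) ^ r := by
  rcases eq_or_lt_of_le hr with hr1 | hr1
  · subst hr1
    simp only [ENNReal.rpow_one, one_div_one]
    exact le_of_eq (swap_tri hW hg)
  have hr0 : (0:ℝ) < r := lt_trans one_pos hr1
  -- trunc12ations
  have hHnmeas : ∀ n, Measurable (fun x => ∫⁻ y in Ioo (0:ℝ) x, trunc12 g n y) := by
    intro n
    have hmono : Monotone (fun x => ∫⁻ y in Ioo (0:ℝ) x, trunc12 g n y) :=
      fun x x' h => lintegral_mono_set (Ioo_subset_Ioo le_rfl h)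
    exact hmono.measurable
  have hHnsup : ∀ x : ℝ, (⨆ n, ∫⁻ y in Ioo (0:ℝ) x, trunc12 g n y)
      = ∫⁻ y in Ioo (0:ℝ) x, g y := by
    intro x
    rw [← lintegral_iSup (fun n => trunc12_meas hg n) (fun n m hnm y => trunc12_mono hnm y)]
    refine setLIntegral_congr_fun measurableSet_Ioo (fun y hy => ?_)
    exact trunc12_sup g hy.1
  have hHnmono : ∀ x : ℝ, Monotone (fun n => ∫⁻ y in Ioo (0:ℝ) x, trunc12 g n y) :=
    fun x n m hnm => lintegral_mono (fun y => trunc12_mono hnm y)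
  have hmeas' : ∀ n, Measurable (fun x =>
      trunc12 W n x * (∫⁻ y in Ioo (0:ℝ) x, trunc12 g n y) ^ r) := fun n =>
    (trunc12_meas hW n).mul
      (by exact ENNReal.continuous_rpow_const.measurable.comp (hHnmeas n))
  have hmono' : Monotone (fun n => fun x =>
      trunc12 W n x * (∫⁻ y in Ioo (0:ℝ) x, trunc12 g n y) ^ r) :=
    fun n m hnm x => mul_le_mul' (trunc12_mono hnm x)
      (ENNReal.rpow_le_rpow (hHnmono x hnm) hr0.le)
  -- monotone convergence
  have hmct : ∫⁻ x in Ioi (0:ℝ), W x * (∫⁻ y in Ioo (0:ℝ) x, g y) ^ r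
      = ⨆ n, ∫⁻ x in Ioi (0:ℝ),
          trunc12 W n x * (∫⁻ y in Ioo (0:ℝ) x, trunc12 g n y) ^ r := by
    rw [← lintegral_iSup hmeas' hmono']
    refine setLIntegral_congr_fun measurableSet_Ioi (fun x hx => ?_)
    rw [← isup_mul_mono (fun n m hnm => trunc12_mono hnm x)
      (fun n m hnm => ENNReal.rpow_le_rpow (hHnmono x hnm) hr0.le),
      ← isup_rpow (hHnmono x) hr0, hHnsup x, trunc12_sup W hx]
  rw [hmct]
  refine iSup_le fun n => ?_
  -- each trunc12ated integral is finite
  have hfin : ∫⁻ x in Ioi (0:ℝ), trunc12 W n x * (∫⁻ y in Ioo (0:ℝ) x, trunc12 g n y) ^ r ≠ ⊤ := by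
    apply LT.lt.ne
    have hbound : ∀ x : ℝ, trunc12 W n x * (∫⁻ y in Ioo (0:ℝ) x, trunc12 g n y) ^ r ≤
        (Ioo ((n:ℝ)+1)⁻¹ ((n:ℝ)+1)).indicator
          (fun _ => (n : ℝ≥0∞) * ((n:ℝ≥0∞) * ENNReal.ofReal ((n:ℝ)+1)) ^ r) x := by
      intro x
      by_cases hx : x ∈ Ioo ((n:ℝ)+1)⁻¹ ((n:ℝ)+1)
      · rw [Set.indicator_of_mem hx]
        refine mul_le_mul' (trunc12_le_const W n x) (ENNReal.rpow_le_rpow ?_ hr0.le)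
        calc (∫⁻ y in Ioo (0:ℝ) x, trunc12 g n y) ≤ ∫⁻ y in Ioo (0:ℝ) x, (Ioo ((n:ℝ)+1)⁻¹ ((n:ℝ)+1)).indicator
              (fun _ => (n:ℝ≥0∞)) y := by
              refine lintegral_mono fun y => ?_
              by_cases hy : y ∈ Ioo ((n:ℝ)+1)⁻¹ ((n:ℝ)+1)
              · rw [Set.indicator_of_mem hy]; exact trunc12_le_const g n y
              · rw [trunc12_eq_zero_of_not_mem g n hy]; exact zero_le'
          _ ≤ ∫⁻ _ in Ioo ((n:ℝ)+1)⁻¹ ((n:ℝ)+1), (n:ℝ≥0∞) := by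
              rw [lintegral_indicator measurableSet_Ioo,
                Measure.restrict_restrict measurableSet_Ioo]
              refine le_trans (lintegral_mono_set (inter_subset_left)) le_rfl
          _ ≤ (n:ℝ≥0∞) * ENNReal.ofReal ((n:ℝ)+1) := by
              rw [setLIntegral_const, Real.volume_Ioo]
              refine mul_le_mul' le_rfl (ENNReal.ofReal_le_ofReal ?_)
              have : (0:ℝ) < ((n:ℝ)+1)⁻¹ := by positivity
              linarith
      · rw [Set.indicator_of_notMem hx, trunc12_eq_zero_of_not_mem W n hx, zero_mul]
    calc ∫⁻ x in Ioi (0:ℝ), trunc12 W n x * (∫⁻ y in Ioo (0:ℝ) x, trunc12 g n y) ^ r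
        ≤ ∫⁻ x in Ioi (0:ℝ), (Ioo ((n:ℝ)+1)⁻¹ ((n:ℝ)+1)).indicator
            (fun _ => (n : ℝ≥0∞) * ((n:ℝ≥0∞) * ENNReal.ofReal ((n:ℝ)+1)) ^ r) x :=
          lintegral_mono hbound
      _ ≤ ∫⁻ _ in Ioo ((n:ℝ)+1)⁻¹ ((n:ℝ)+1),
            ((n : ℝ≥0∞) * ((n:ℝ≥0∞) * ENNReal.ofReal ((n:ℝ)+1)) ^ r) := by
          rw [lintegral_indicator measurableSet_Ioo,
            Measure.restrict_restrict measurableSet_Ioo]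
          exact lintegral_mono_set inter_subset_left
      _ < ⊤ := by
          rw [setLIntegral_const, Real.volume_Ioo]
          refine ENNReal.mul_lt_top ?_ ENNReal.ofReal_lt_top
          exact lt_top_iff_ne_top.2 (ENNReal.mul_ne_top (ENNReal.natCast_ne_top n)
            (ENNReal.rpow_ne_top_of_nonneg hr0.le
              (ENNReal.mul_ne_top (ENNReal.natCast_ne_top n) ENNReal.ofReal_ne_top)))
  refine le_trans (minkowski_tri_of_ne_top hr1 (trunc12_meas hW n) (trunc12_meas hg n) hfin) ?_
  refine ENNReal.rpow_le_rpow (lintegral_mono fun y => ?_) hr0.le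
  refine mul_le_mul' (trunc12_le g n y) (ENNReal.rpow_le_rpow ?_ (one_div_nonneg.mpr hr0.le))
  exact lintegral_mono fun x => trunc12_le W n x

lemma dyadic_cover {y : ℝ} (hy : 0 < y) :
    Ioi y ⊆ ⋃ n : ℕ, Ioc (2^n * y) (2^(n+1) * y) := by
  intro x hx
  have hx' : y < x := hx
  have hP : ∃ n : ℕ, x ≤ 2^(n+1) * y := by
    obtain ⟨m, hm⟩ := pow_unbounded_of_one_lt (x / y) (one_lt_two (α := ℝ))
    exact ⟨m, le_trans ((div_lt_iff₀ hy).mp hm).le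
      (mul_le_mul_of_nonneg_right
        (pow_le_pow_right₀ (one_le_two (α := ℝ)) (Nat.le_succ m)) hy.le)⟩
  classical
  set n₀ := Nat.find hP with hn₀
  have h1 : x ≤ 2^(n₀+1) * y := Nat.find_spec hP
  have h2 : 2^n₀ * y < x := by
    rcases Nat.eq_zero_or_pos n₀ with h | h
    · rw [h]; simpa using hx'
    · have := Nat.find_min hP (m := n₀ - 1) (by omega)
      push_neg at this
      calc 2^n₀ * y = 2^((n₀-1)+1) * y := by congr 2; omega
        _ < x := this
  exact mem_iUnion.2 ⟨n₀, h2, h1⟩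

lemma tail_bound {a b : ℝ} (ha : 0 ≤ a) {V : ℝ → ℝ≥0∞} (hVm : Measurable V) (A : ℝ≥0∞)
    (hV : ∀ z : ℝ, 0 < z → ∫⁻ t in Ioi z, V t ≤ A * ENNReal.ofReal z ^ (-b))
    {y : ℝ} (hy : 0 < y) :
    ∫⁻ x in Ioi y, V x * ENNReal.ofReal x ^ a ≤
      (2:ℝ≥0∞) ^ a * A * ENNReal.ofReal y ^ (a - b) * (1 - (2:ℝ≥0∞) ^ (a - b))⁻¹ := by
  have hey0 : ENNReal.ofReal y ≠ 0 := (ENNReal.ofReal_pos.mpr hy).ne'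
  have heyt : ENNReal.ofReal y ≠ ⊤ := ENNReal.ofReal_ne_top
  have two_rpow : ∀ (m : ℕ) (c : ℝ),
      ENNReal.ofReal (2^m * y) ^ c = (2:ℝ≥0∞) ^ ((m:ℝ)*c) * ENNReal.ofReal y ^ c := by
    intro m c
    rw [ENNReal.ofReal_mul (by positivity),
      ENNReal.mul_rpow_of_ne_top ENNReal.ofReal_ne_top ENNReal.ofReal_ne_top]
    congr 1
    rw [ENNReal.ofReal_pow (by norm_num : (0:ℝ) ≤ 2), ENNReal.ofReal_ofNat,
      ← ENNReal.rpow_natCast (2:ℝ≥0∞) m, ← ENNReal.rpow_mul]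
  have hterm : ∀ n : ℕ, ∫⁻ x in Ioc (2^n * y) (2^(n+1) * y), V x * ENNReal.ofReal x ^ a ≤
      ((2:ℝ≥0∞)^a * A * ENNReal.ofReal y ^ (a-b)) * ((2:ℝ≥0∞)^(a-b))^n := by
    intro n
    calc ∫⁻ x in Ioc (2^n*y) (2^(n+1)*y), V x * ENNReal.ofReal x ^ a
        ≤ ∫⁻ x in Ioc (2^n*y) (2^(n+1)*y), ENNReal.ofReal (2^(n+1)*y) ^ a * V x := by
          refine setLIntegral_mono_ae (measurable_const.mul hVm).aemeasurable
            (ae_of_all _ fun x hx => ?_)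
          rw [mul_comm]
          exact mul_le_mul_left (ENNReal.rpow_le_rpow (ENNReal.ofReal_le_ofReal hx.2) ha) _
      _ = ENNReal.ofReal (2^(n+1)*y) ^ a * ∫⁻ x in Ioc (2^n*y) (2^(n+1)*y), V x :=
          lintegral_const_mul' _ _ (ENNReal.rpow_ne_top_of_nonneg ha ENNReal.ofReal_ne_top)
      _ ≤ ENNReal.ofReal (2^(n+1)*y) ^ a * (A * ENNReal.ofReal (2^n * y) ^ (-b)) := by
          refine mul_le_mul_right (le_trans (lintegral_mono_set Ioc_subset_Ioi_self) ?_) _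
          exact hV _ (by positivity)
      _ = ((2:ℝ≥0∞)^a * A * ENNReal.ofReal y ^ (a-b)) * ((2:ℝ≥0∞)^(a-b))^n := by
          rw [two_rpow (n+1) a, two_rpow n (-b),
            ← ENNReal.rpow_natCast ((2:ℝ≥0∞)^(a-b)) n, ← ENNReal.rpow_mul]
          push_cast
          have e1 : ((n:ℝ)+1)*a = a + (n:ℝ)*a := by ring
          calc (2:ℝ≥0∞) ^ (((n:ℝ)+1)*a) * ENNReal.ofReal y ^ a *
                (A * ((2:ℝ≥0∞) ^ ((n:ℝ)*(-b)) * ENNReal.ofReal y ^ (-b)))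
              = ((2:ℝ≥0∞) ^ (((n:ℝ)+1)*a) * (2:ℝ≥0∞) ^ ((n:ℝ)*(-b))) *
                (ENNReal.ofReal y ^ a * ENNReal.ofReal y ^ (-b)) * A := by ring
            _ = (2:ℝ≥0∞) ^ (((n:ℝ)+1)*a + (n:ℝ)*(-b)) *
                ENNReal.ofReal y ^ (a + -b) * A := by
                rw [← ENNReal.rpow_add _ _ two_ne_zero ENNReal.ofNat_ne_top,
                  ← ENNReal.rpow_add _ _ hey0 heyt]
            _ = (2:ℝ≥0∞) ^ a * A * ENNReal.ofReal y ^ (a-b) * (2:ℝ≥0∞) ^ ((a-b)*(n:ℝ)) := by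
                rw [show ((n:ℝ)+1)*a + (n:ℝ)*(-b) = a + (a-b)*(n:ℝ) by ring,
                  ENNReal.rpow_add _ _ two_ne_zero ENNReal.ofNat_ne_top,
                  show a + -b = a - b by ring]
                ring
  calc ∫⁻ x in Ioi y, V x * ENNReal.ofReal x ^ a
      ≤ ∫⁻ x in ⋃ n : ℕ, Ioc (2^n * y) (2^(n+1) * y), V x * ENNReal.ofReal x ^ a :=
        lintegral_mono_set (dyadic_cover hy)
    _ ≤ ∑' n : ℕ, ∫⁻ x in Ioc (2^n * y) (2^(n+1) * y), V x * ENNReal.ofReal x ^ a :=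
        lintegral_iUnion_le _ _
    _ ≤ ∑' n : ℕ, ((2:ℝ≥0∞)^a * A * ENNReal.ofReal y ^ (a-b)) * ((2:ℝ≥0∞)^(a-b))^n :=
        ENNReal.tsum_le_tsum hterm
    _ = ((2:ℝ≥0∞)^a * A * ENNReal.ofReal y ^ (a-b)) * ∑' n : ℕ, ((2:ℝ≥0∞)^(a-b))^n :=
        ENNReal.tsum_mul_left
    _ = _ := by rw [ENNReal.tsum_geometric]

open intervalIntegral in
lemma sqrt_integral {x : ℝ} (hx : 0 < x) :
    ∫⁻ y in Ioo (0:ℝ) x, ENNReal.ofReal y ^ (-(2⁻¹:ℝ)) =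
      ENNReal.ofReal (2 * x ^ ((2:ℝ)⁻¹)) := by
  have hint : IntegrableOn (fun y : ℝ => y ^ (-(2⁻¹:ℝ))) (Ioo 0 x) := by
    have h1 : IntervalIntegrable (fun y : ℝ => y ^ (-(2⁻¹:ℝ))) volume 0 x :=
      intervalIntegral.intervalIntegrable_rpow' (by norm_num)
    exact ((intervalIntegrable_iff_integrableOn_Ioc_of_le hx.le).mp h1).mono_set
      Ioo_subset_Ioc_self
  have hval : ∫ y in Ioo (0:ℝ) x, y ^ (-(2⁻¹:ℝ)) = 2 * x ^ ((2:ℝ)⁻¹) := by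
    have hrw := integral_rpow (a := 0) (b := x) (r := -(2⁻¹:ℝ))
      (Or.inl (by norm_num))
    rw [← MeasureTheory.integral_Ioc_eq_integral_Ioo,
      ← intervalIntegral.integral_of_le hx.le, hrw]
    rw [Real.zero_rpow (by norm_num)]
    norm_num
    ring
  calc ∫⁻ y in Ioo (0:ℝ) x, ENNReal.ofReal y ^ (-(2⁻¹:ℝ))
      = ∫⁻ y in Ioo (0:ℝ) x, ENNReal.ofReal (y ^ (-(2⁻¹:ℝ))) := by
        refine setLIntegral_congr_fun measurableSet_Ioo (fun y hy => ?_)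
        rw [ENNReal.ofReal_rpow_of_pos hy.1]
    _ = ENNReal.ofReal (∫ y in Ioo (0:ℝ) x, y ^ (-(2⁻¹:ℝ))) :=
        (MeasureTheory.ofReal_integral_eq_lintegral_ofReal hint
          ((ae_restrict_mem measurableSet_Ioo).mono fun y hy =>
            Real.rpow_nonneg hy.1.le _)).symm
    _ = ENNReal.ofReal (2 * x ^ ((2:ℝ)⁻¹)) := by rw [hval]

lemma hoelder_step {p p' : ℝ} (hpc : Real.HolderConjugate p p') {f : ℝ → ℝ≥0∞}
    (hf : Measurable f) {x : ℝ} (hx : 0 < x) :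
    ∫⁻ y in Ioo (0:ℝ) x, f y ≤
      (∫⁻ y in Ioo (0:ℝ) x, f y ^ p * ENNReal.ofReal y ^ (p/(2*p'))) ^ (1/p) *
        ENNReal.ofReal (2 * x ^ ((2:ℝ)⁻¹)) ^ (1/p') := by
  have hp0 : 0 < p := hpc.pos
  have hp'0 : 0 < p' := hpc.symm.pos
  have hmeas_e : Measurable fun y : ℝ => ENNReal.ofReal y ^ (1/(2*p')) :=
    ENNReal.continuous_rpow_const.measurable.comp ENNReal.measurable_ofReal
  have hmeas_e' : Measurable fun y : ℝ => ENNReal.ofReal y ^ (-(1/(2*p'))) :=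
    ENNReal.continuous_rpow_const.measurable.comp ENNReal.measurable_ofReal
  have key : ∫⁻ y in Ioo (0:ℝ) x, f y =
      ∫⁻ y in Ioo (0:ℝ) x,
        (fun y => f y * ENNReal.ofReal y ^ (1/(2*p'))) y *
          (fun y => ENNReal.ofReal y ^ (-(1/(2*p')))) y := by
    refine setLIntegral_congr_fun measurableSet_Ioo (fun y hy => ?_)
    simp only
    rw [mul_assoc, ← ENNReal.rpow_add _ _ (ENNReal.ofReal_pos.mpr hy.1).ne'
      ENNReal.ofReal_ne_top, add_neg_cancel, ENNReal.rpow_zero, mul_one]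
  rw [key]
  refine le_trans (ENNReal.lintegral_mul_le_Lp_mul_Lq _ hpc
    ((hf.mul hmeas_e).aemeasurable) hmeas_e'.aemeasurable) ?_
  have e1 : ∀ y : ℝ, (f y * ENNReal.ofReal y ^ (1/(2*p'))) ^ p
      = f y ^ p * ENNReal.ofReal y ^ (p/(2*p')) := by
    intro y
    rw [ENNReal.mul_rpow_of_nonneg _ _ hp0.le, ← ENNReal.rpow_mul,
      show (1/(2*p'))*p = p/(2*p') by ring]
  have e2 : (∫⁻ y in Ioo (0:ℝ) x, (ENNReal.ofReal y ^ (-(1/(2*p')))) ^ p')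
      = ENNReal.ofReal (2 * x ^ ((2:ℝ)⁻¹)) := by
    rw [← sqrt_integral hx]
    refine lintegral_congr fun y => ?_
    rw [← ENNReal.rpow_mul,
      show (-(1/(2*p')))*p' = -(2⁻¹:ℝ) by field_simp]
  simp_rw [e1]
  rw [e2]

theorem statement12
    (p q p' : ℝ) (hp : 1 < p) (hpq : p ≤ q) (hp' : p' = p / (p - 1))
    (k : ℝ → ℝ≥0∞) (hkmeas : Measurable k) :
    (∃ c > 0, ∀ f : ℝ → ℝ≥0∞, Measurable f →
      (∫⁻ x in Ioi (0:ℝ), (k x * ∫⁻ y in Ioo (0:ℝ) x, f y) ^ q) ^ (1 / q) ≤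
        ENNReal.ofReal c * (∫⁻ y in Ioi (0:ℝ), f y ^ p) ^ (1 / p)) ↔
    (⨆ x ∈ Ioi (0:ℝ),
      ENNReal.ofReal x * (∫⁻ y in Ioi x, k y ^ q) ^ (p' / q)) < ⊤ := by
  have hp0 : (0:ℝ) < p := lt_trans one_pos hp
  have hq1 : (1:ℝ) < q := lt_of_lt_of_le hp hpq
  have hq0 : (0:ℝ) < q := lt_trans one_pos hq1
  have hpc : Real.HolderConjugate p p' :=
    (Real.holderConjugate_iff_eq_conjExponent hp).2 hp'
  have hp'1 : (1:ℝ) < p' := hpc.symm.lt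
  have hp'0 : (0:ℝ) < p' := lt_trans one_pos hp'1
  have hkqmeas : Measurable fun t => k t ^ q :=
    ENNReal.continuous_rpow_const.measurable.comp hkmeas
  constructor
  · rintro ⟨c, hc0, hineq⟩
    have hfin : ENNReal.ofReal c ^ p' < ⊤ :=
      ENNReal.rpow_lt_top_of_nonneg hp'0.le ENNReal.ofReal_ne_top
    refine lt_of_le_of_lt (iSup₂_le fun x hx => ?_) hfin
    have hx : (0:ℝ) < x := hx
    have hex0 : ENNReal.ofReal x ≠ 0 := (ENNReal.ofReal_pos.mpr hx).ne'
    have hext : ENNReal.ofReal x ≠ ⊤ := ENNReal.ofReal_ne_top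
    set K := ∫⁻ y in Ioi x, k y ^ q with hK
    specialize hineq ((Ioo (0:ℝ) x).indicator fun _ => 1)
      (measurable_one.indicator measurableSet_Ioo)
    -- compute the right side
    have hR : ∫⁻ y in Ioi (0:ℝ), ((Ioo (0:ℝ) x).indicator (fun _ => (1:ℝ≥0∞)) y) ^ p
        = ENNReal.ofReal x := by
      have h1 : ∀ y : ℝ, ((Ioo (0:ℝ) x).indicator (fun _ => (1:ℝ≥0∞)) y) ^ p
          = (Ioo (0:ℝ) x).indicator (fun _ => (1:ℝ≥0∞)) y := by
        intro y
        by_cases hy : y ∈ Ioo (0:ℝ) x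
        · rw [Set.indicator_of_mem hy, ENNReal.one_rpow]
        · rw [Set.indicator_of_notMem hy, ENNReal.zero_rpow_of_pos hp0]
      simp_rw [h1]
      rw [lintegral_indicator measurableSet_Ioo,
        Measure.restrict_restrict measurableSet_Ioo,
        inter_eq_self_of_subset_left Ioo_subset_Ioi_self, setLIntegral_one,
        Real.volume_Ioo, sub_zero]
    rw [hR] at hineq
    -- lower bound for the left side
    have hL : ENNReal.ofReal x * K ^ (1/q)
        ≤ (∫⁻ t in Ioi (0:ℝ),
            (k t * ∫⁻ y in Ioo (0:ℝ) t, (Ioo (0:ℝ) x).indicator (fun _ => (1:ℝ≥0∞)) y) ^ q)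
          ^ (1/q) := by
      have h2 : ENNReal.ofReal x ^ q * K
          ≤ ∫⁻ t in Ioi (0:ℝ),
            (k t * ∫⁻ y in Ioo (0:ℝ) t, (Ioo (0:ℝ) x).indicator (fun _ => (1:ℝ≥0∞)) y) ^ q := by
        have h3 : ∀ t : ℝ, x < t →
            (k t * ∫⁻ y in Ioo (0:ℝ) t, (Ioo (0:ℝ) x).indicator (fun _ => (1:ℝ≥0∞)) y) ^ q
            = k t ^ q * ENNReal.ofReal x ^ q := by
          intro t ht
          have : ∫⁻ y in Ioo (0:ℝ) t, (Ioo (0:ℝ) x).indicator (fun _ => (1:ℝ≥0∞)) y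
              = ENNReal.ofReal x := by
            rw [lintegral_indicator measurableSet_Ioo,
              Measure.restrict_restrict measurableSet_Ioo,
              inter_eq_self_of_subset_left (Ioo_subset_Ioo le_rfl ht.le),
              setLIntegral_one, Real.volume_Ioo, sub_zero]
          rw [this, ENNReal.mul_rpow_of_nonneg _ _ hq0.le]
        calc ENNReal.ofReal x ^ q * K
            = ∫⁻ t in Ioi x, k t ^ q * ENNReal.ofReal x ^ q := by
              rw [lintegral_mul_const _ hkqmeas, mul_comm]
          _ = ∫⁻ t in Ioi x,
              (k t * ∫⁻ y in Ioo (0:ℝ) t, (Ioo (0:ℝ) x).indicator (fun _ => (1:ℝ≥0∞)) y) ^ q := by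
              refine (setLIntegral_congr_fun measurableSet_Ioi
                (fun t ht => ?_))
              rw [h3 t ht]
          _ ≤ _ := lintegral_mono_set (Ioi_subset_Ioi hx.le)
      calc ENNReal.ofReal x * K ^ (1/q)
          = (ENNReal.ofReal x ^ q * K) ^ (1/q) := by
            rw [ENNReal.mul_rpow_of_nonneg _ _ (by positivity), ← ENNReal.rpow_mul,
              mul_one_div, div_self hq0.ne', ENNReal.rpow_one]
        _ ≤ _ := ENNReal.rpow_le_rpow h2 (by positivity)
    have hmain : ENNReal.ofReal x * K ^ (1/q) ≤
        ENNReal.ofReal c * ENNReal.ofReal x ^ (1/p) := le_trans hL hineq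
    -- divide by x
    have hdiv : K ^ (1/q) ≤ ENNReal.ofReal c * ENNReal.ofReal x ^ (1/p - 1) := by
      have h4 : K ^ (1/q) ≤ ENNReal.ofReal c * ENNReal.ofReal x ^ (1/p) / ENNReal.ofReal x := by
        rw [ENNReal.le_div_iff_mul_le (Or.inl hex0) (Or.inl hext), mul_comm]
        exact hmain
      refine le_trans h4 (le_of_eq ?_)
      rw [div_eq_mul_inv, mul_assoc, ← ENNReal.rpow_neg_one (ENNReal.ofReal x),
        ← ENNReal.rpow_add _ _ hex0 hext]
      norm_num [sub_eq_add_neg]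
    -- raise to p'
    have hup : K ^ (p'/q) ≤ ENNReal.ofReal c ^ p' * ENNReal.ofReal x ^ ((1/p - 1) * p') := by
      calc K ^ (p'/q) = (K ^ (1/q)) ^ p' := by
            rw [← ENNReal.rpow_mul, one_div, inv_mul_eq_div]
        _ ≤ (ENNReal.ofReal c * ENNReal.ofReal x ^ (1/p - 1)) ^ p' :=
            ENNReal.rpow_le_rpow hdiv hp'0.le
        _ = _ := by
            rw [ENNReal.mul_rpow_of_nonneg _ _ hp'0.le, ← ENNReal.rpow_mul]
    have hexp : (1/p - 1) * p' = -1 := by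
      have h5 := hpc.inv_add_inv_eq_one
      have h6 : 1/p - 1 = -(1/p') := by
        rw [one_div, one_div]; linarith
      rw [h6]
      field_simp
    rw [hexp] at hup
    calc ENNReal.ofReal x * K ^ (p'/q)
        ≤ ENNReal.ofReal x * (ENNReal.ofReal c ^ p' * ENNReal.ofReal x ^ (-1:ℝ)) :=
          mul_le_mul_right hup _
      _ = ENNReal.ofReal c ^ p' * (ENNReal.ofReal x * (ENNReal.ofReal x)⁻¹) := by
          rw [ENNReal.rpow_neg_one]; ring
      _ = ENNReal.ofReal c ^ p' := by
          rw [ENNReal.mul_inv_cancel hex0 hext, mul_one]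
  · intro hsup
    set B := ⨆ x ∈ Ioi (0:ℝ), ENNReal.ofReal x * (∫⁻ y in Ioi x, k y ^ q) ^ (p'/q) with hB
    have hBt : B ≠ ⊤ := hsup.ne
    set β := q / p' with hβ
    have hβ0 : (0:ℝ) < β := by positivity
    set a := q / (2*p') with ha
    have ha0 : (0:ℝ) < a := by positivity
    have hab : a - β = -a := by rw [ha, hβ]; field_simp; ring
    -- the tail estimate coming from the finiteness of the supremum
    have hV : ∀ z : ℝ, 0 < z → ∫⁻ t in Ioi z, k t ^ q ≤ B ^ β * ENNReal.ofReal z ^ (-β) := by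
      intro z hz
      have hz0 : ENNReal.ofReal z ≠ 0 := (ENNReal.ofReal_pos.mpr hz).ne'
      have hle : ENNReal.ofReal z * (∫⁻ y in Ioi z, k y ^ q) ^ (p'/q) ≤ B :=
        le_iSup₂ (f := fun x (_ : x ∈ Ioi (0:ℝ)) =>
          ENNReal.ofReal x * (∫⁻ y in Ioi x, k y ^ q) ^ (p'/q)) z hz
      have h1 : (∫⁻ y in Ioi z, k y ^ q) ^ (p'/q) ≤ B / ENNReal.ofReal z := by
        rw [ENNReal.le_div_iff_mul_le (Or.inl hz0) (Or.inl ENNReal.ofReal_ne_top), mul_comm]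
        exact hle
      calc ∫⁻ t in Ioi z, k t ^ q
          = ((∫⁻ t in Ioi z, k t ^ q) ^ (p'/q)) ^ β := by
            rw [← ENNReal.rpow_mul, show (p'/q) * β = 1 by rw [hβ]; field_simp,
              ENNReal.rpow_one]
        _ ≤ (B / ENNReal.ofReal z) ^ β := ENNReal.rpow_le_rpow h1 hβ0.le
        _ = B ^ β * ENNReal.ofReal z ^ (-β) := by
            rw [ENNReal.div_rpow_of_nonneg _ _ hβ0.le, ENNReal.rpow_neg, div_eq_mul_inv]
    -- the constant
    set D : ℝ≥0∞ := (2:ℝ≥0∞) ^ β * ((2:ℝ≥0∞) ^ a * (B ^ β) *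
      ENNReal.ofReal (1:ℝ) ^ (0:ℝ) * (1 - (2:ℝ≥0∞) ^ (-a))⁻¹) with hD
    have hρ : (2:ℝ≥0∞) ^ (-a) < 1 :=
      ENNReal.rpow_lt_one_of_one_lt_of_neg ENNReal.one_lt_two (neg_lt_zero.mpr ha0)
    have hsub0 : (1:ℝ≥0∞) - (2:ℝ≥0∞) ^ (-a) ≠ 0 := by
      intro h
      exact absurd (tsub_eq_zero_iff_le.mp h) (not_le.2 hρ)
    have hDt : D ≠ ⊤ := by
      rw [hD]
      refine ENNReal.mul_ne_top (ENNReal.rpow_ne_top_of_nonneg hβ0.le ENNReal.ofNat_ne_top) ?_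
      refine ENNReal.mul_ne_top (ENNReal.mul_ne_top (ENNReal.mul_ne_top
        (ENNReal.rpow_ne_top_of_nonneg ha0.le ENNReal.ofNat_ne_top)
        (ENNReal.rpow_ne_top_of_nonneg hβ0.le hBt)) ?_) (ENNReal.inv_ne_top.2 hsub0)
      exact ENNReal.rpow_ne_top_of_nonneg le_rfl ENNReal.ofReal_ne_top
    refine ⟨(D ^ (1/q)).toReal + 1, by positivity, fun f hf => ?_⟩
    -- auxiliary functions
    set g : ℝ → ℝ≥0∞ := fun y => f y ^ p * ENNReal.ofReal y ^ (p/(2*p')) with hg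
    have hgmeas : Measurable g :=
      (ENNReal.continuous_rpow_const.measurable.comp hf).mul
        (ENNReal.continuous_rpow_const.measurable.comp ENNReal.measurable_ofReal)
    set W : ℝ → ℝ≥0∞ :=
      fun t => k t ^ q * ((2:ℝ≥0∞) * ENNReal.ofReal t ^ ((2:ℝ)⁻¹)) ^ β with hW
    have hWmeas : Measurable W :=
      hkqmeas.mul (ENNReal.continuous_rpow_const.measurable.comp
        (measurable_const.mul
          (ENNReal.continuous_rpow_const.measurable.comp ENNReal.measurable_ofReal)))
    have hGmono : Monotone (fun x => ∫⁻ y in Ioo (0:ℝ) x, g y) :=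
      fun x x' h => lintegral_mono_set (Ioo_subset_Ioo le_rfl h)
    have hGmeas : Measurable (fun x => ∫⁻ y in Ioo (0:ℝ) x, g y) := hGmono.measurable
    -- pointwise bound from Hölder
    have hstep1 : ∀ x : ℝ, 0 < x → (k x * ∫⁻ y in Ioo (0:ℝ) x, f y) ^ q ≤
        W x * (∫⁻ y in Ioo (0:ℝ) x, g y) ^ (q/p) := by
      intro x hx
      have hE : ENNReal.ofReal (2 * x ^ ((2:ℝ)⁻¹)) =
          (2:ℝ≥0∞) * ENNReal.ofReal x ^ ((2:ℝ)⁻¹) := by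
        rw [ENNReal.ofReal_mul (by norm_num : (0:ℝ) ≤ 2), ENNReal.ofReal_ofNat,
          ← ENNReal.ofReal_rpow_of_pos hx]
      have hF := hoelder_step hpc hf hx
      calc (k x * ∫⁻ y in Ioo (0:ℝ) x, f y) ^ q
          = k x ^ q * (∫⁻ y in Ioo (0:ℝ) x, f y) ^ q :=
            ENNReal.mul_rpow_of_nonneg _ _ hq0.le
        _ ≤ k x ^ q * ((∫⁻ y in Ioo (0:ℝ) x, g y) ^ (1/p) *
              ENNReal.ofReal (2 * x ^ ((2:ℝ)⁻¹)) ^ (1/p')) ^ q :=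
            mul_le_mul_right (ENNReal.rpow_le_rpow hF hq0.le) _
        _ = W x * (∫⁻ y in Ioo (0:ℝ) x, g y) ^ (q/p) := by
            rw [hE, ENNReal.mul_rpow_of_nonneg _ _ hq0.le, ← ENNReal.rpow_mul,
              ← ENNReal.rpow_mul, show (1/p)*q = q/p by ring,
              show (1/p')*q = β by rw [hβ]; ring]
            simp only [hW]
            ring
    have hstep2 : ∫⁻ x in Ioi (0:ℝ), (k x * ∫⁻ y in Ioo (0:ℝ) x, f y) ^ q ≤
        ∫⁻ x in Ioi (0:ℝ), W x * (∫⁻ y in Ioo (0:ℝ) x, g y) ^ (q/p) := by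
      refine setLIntegral_mono_ae
        ((hWmeas.mul (ENNReal.continuous_rpow_const.measurable.comp hGmeas)).aemeasurable)
        (ae_of_all _ hstep1)
    have hr1 : (1:ℝ) ≤ q/p := (one_le_div hp0).2 hpq
    have hmink := minkowski_tri hr1 hWmeas hgmeas
    -- bound on the tail of W
    have hT : ∀ y : ℝ, 0 < y → (∫⁻ x in Ioi y, W x) ≤ D * ENNReal.ofReal y ^ (-a) := by
      intro y hy
      have h2t : ((2:ℝ≥0∞) ^ β) ≠ ⊤ := ENNReal.rpow_ne_top_of_nonneg hβ0.le ENNReal.ofNat_ne_top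
      have h1 : ∫⁻ x in Ioi y, W x =
          (2:ℝ≥0∞) ^ β * ∫⁻ x in Ioi y, (k x ^ q) * ENNReal.ofReal x ^ a := by
        rw [← lintegral_const_mul' _ _ h2t]
        refine setLIntegral_congr_fun measurableSet_Ioi (fun x hx => ?_)
        simp only [hW]
        rw [ENNReal.mul_rpow_of_ne_top ENNReal.ofNat_ne_top
            (ENNReal.rpow_ne_top_of_nonneg (by norm_num) ENNReal.ofReal_ne_top),
          ← ENNReal.rpow_mul, show (2⁻¹:ℝ) * β = a by rw [hβ, ha]; ring]
        ring
      rw [h1]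
      have h2 := tail_bound ha0.le hkqmeas (B ^ β) hV hy
      rw [hab] at h2
      calc (2:ℝ≥0∞) ^ β * ∫⁻ x in Ioi y, (k x ^ q) * ENNReal.ofReal x ^ a
          ≤ (2:ℝ≥0∞) ^ β * ((2:ℝ≥0∞) ^ a * (B ^ β) * ENNReal.ofReal y ^ (-a) *
              (1 - (2:ℝ≥0∞) ^ (-a))⁻¹) := mul_le_mul_right h2 _
        _ = D * ENNReal.ofReal y ^ (-a) := by
            rw [hD]
            simp only [ENNReal.rpow_zero]
            ring
    -- bound on the dual integral
    have hDpq : D ^ (p/q) ≠ ⊤ := ENNReal.rpow_ne_top_of_nonneg (by positivity) hDt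
    have hJ : ∫⁻ y in Ioi (0:ℝ), g y * (∫⁻ x in Ioi y, W x) ^ (1/(q/p)) ≤
        D ^ (p/q) * ∫⁻ y in Ioi (0:ℝ), f y ^ p := by
      have h3 : ∀ y : ℝ, 0 < y → g y * (∫⁻ x in Ioi y, W x) ^ (1/(q/p)) ≤
          D ^ (p/q) * f y ^ p := by
        intro y hy
        have hy0 : ENNReal.ofReal y ≠ 0 := (ENNReal.ofReal_pos.mpr hy).ne'
        have hyt : ENNReal.ofReal y ≠ ⊤ := ENNReal.ofReal_ne_top
        have hmt : ENNReal.ofReal y ^ (-a) ≠ ⊤ := by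
          rw [ENNReal.rpow_neg]
          refine ENNReal.inv_ne_top.2 ?_
          simp [ENNReal.rpow_eq_zero_iff, hy0, hyt, ha0.ne']
        calc g y * (∫⁻ x in Ioi y, W x) ^ (1/(q/p))
            ≤ g y * (D * ENNReal.ofReal y ^ (-a)) ^ (p/q) := by
              rw [show (1:ℝ)/(q/p) = p/q by rw [one_div_div]]
              exact mul_le_mul_right (ENNReal.rpow_le_rpow (hT y hy) (by positivity)) _
          _ = D ^ (p/q) * (f y ^ p *
                (ENNReal.ofReal y ^ (p/(2*p')) * ENNReal.ofReal y ^ (-(p/(2*p'))))) := by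
              rw [ENNReal.mul_rpow_of_ne_top hDt hmt, ← ENNReal.rpow_mul,
                show (-a) * (p/q) = -(p/(2*p')) by rw [ha]; field_simp]
              simp only [hg]
              ring
          _ = D ^ (p/q) * f y ^ p := by
              rw [← ENNReal.rpow_add _ _ hy0 hyt, add_neg_cancel, ENNReal.rpow_zero, mul_one]
      calc ∫⁻ y in Ioi (0:ℝ), g y * (∫⁻ x in Ioi y, W x) ^ (1/(q/p))
          ≤ ∫⁻ y in Ioi (0:ℝ), D ^ (p/q) * f y ^ p := by
            refine setLIntegral_mono_ae
              ((measurable_const.mul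
                (ENNReal.continuous_rpow_const.measurable.comp hf)).aemeasurable)
              (ae_of_all _ h3)
        _ = D ^ (p/q) * ∫⁻ y in Ioi (0:ℝ), f y ^ p := lintegral_const_mul' _ _ hDpq
    -- assemble
    have htotal : ∫⁻ x in Ioi (0:ℝ), (k x * ∫⁻ y in Ioo (0:ℝ) x, f y) ^ q ≤
        D * (∫⁻ y in Ioi (0:ℝ), f y ^ p) ^ (q/p) := by
      refine le_trans hstep2 (le_trans hmink ?_)
      calc (∫⁻ y in Ioi (0:ℝ), g y * (∫⁻ x in Ioi y, W x) ^ (1/(q/p))) ^ (q/p)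
          ≤ (D ^ (p/q) * ∫⁻ y in Ioi (0:ℝ), f y ^ p) ^ (q/p) :=
            ENNReal.rpow_le_rpow hJ (by positivity)
        _ = D * (∫⁻ y in Ioi (0:ℝ), f y ^ p) ^ (q/p) := by
            rw [ENNReal.mul_rpow_of_nonneg _ _ (by positivity), ← ENNReal.rpow_mul,
              show (p/q)*(q/p) = 1 by field_simp, ENNReal.rpow_one]
    have hfinal : (∫⁻ x in Ioi (0:ℝ), (k x * ∫⁻ y in Ioo (0:ℝ) x, f y) ^ q) ^ (1/q) ≤
        D ^ (1/q) * (∫⁻ y in Ioi (0:ℝ), f y ^ p) ^ (1/p) := by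
      calc (∫⁻ x in Ioi (0:ℝ), (k x * ∫⁻ y in Ioo (0:ℝ) x, f y) ^ q) ^ (1/q)
          ≤ (D * (∫⁻ y in Ioi (0:ℝ), f y ^ p) ^ (q/p)) ^ (1/q) :=
            ENNReal.rpow_le_rpow htotal (by positivity)
        _ = D ^ (1/q) * (∫⁻ y in Ioi (0:ℝ), f y ^ p) ^ (1/p) := by
            rw [ENNReal.mul_rpow_of_nonneg _ _ (by positivity), ← ENNReal.rpow_mul,
              show (q/p)*(1/q) = 1/p by field_simp]
    refine le_trans hfinal (mul_le_mul_left ?_ _)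
    have hD1t : D ^ ((1:ℝ)/q) ≠ ⊤ := ENNReal.rpow_ne_top_of_nonneg (by positivity) hDt
    calc D ^ ((1:ℝ)/q) = ENNReal.ofReal ((D ^ ((1:ℝ)/q)).toReal) :=
          (ENNReal.ofReal_toReal hD1t).symm
      _ ≤ ENNReal.ofReal ((D ^ ((1:ℝ)/q)).toReal + 1) :=
          ENNReal.ofReal_le_ofReal (by linarith)

end
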